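/- If Ã > 0 and B̃ > 0, then every solution of the envelope system is bounded for all time: |q₁(T)|² ≤ |q₁(0)|² + (Ã/B̃)|q₂(0)|² and |q₂(T)|² ≤ (B̃/Ã)|q₁(0)|² + |q₂(0)|² for all T. -/

import Mathlib

/-- If `Ã > 0` and `B̃ > 0`, every solution of the envelope system is bounded:
`|q₁(T)|² ≤ |q₁(0)|² + (Ã/B̃)|q₂(0)|²` and `|q₂(T)|² ≤ (B̃/Ã)|q₁(0)|² + |q₂(0)|²`. -/
theorem envelope_bounded_solutions
    (A B : ℝ) (hA : 0 < A) (hB : 0 < B) (q₁ q₂ : ℝ → ℂ)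
    (hq₁ : Differentiable ℝ q₁) (hq₂ : Differentiable ℝ q₂)
    (heq₁ : ∀ T : ℝ, Complex.I * deriv q₁ T =
      q₁ T + (A : ℂ) * (starRingEnd ℂ) (q₁ T) * q₂ T)
    (heq₂ : ∀ T : ℝ, Complex.I * deriv q₂ T = q₂ T + (B : ℂ) * (q₁ T) ^ 2) :
    ∀ T : ℝ,
      ‖q₁ T‖ ^ 2 ≤ ‖q₁ 0‖ ^ 2 + (A / B) * ‖q₂ 0‖ ^ 2 ∧
      ‖q₂ T‖ ^ 2 ≤ (B / A) * ‖q₁ 0‖ ^ 2 + ‖q₂ 0‖ ^ 2 := by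
  set f : ℝ → ℝ := fun T => B * ‖q₁ T‖ ^ 2 + A * ‖q₂ T‖ ^ 2 with hf
  have hderiv : ∀ T : ℝ, HasDerivAt f 0 T := by
    intro T
    have hd₁ : HasDerivAt q₁ (deriv q₁ T) T := (hq₁ T).hasDerivAt
    have hd₂ : HasDerivAt q₂ (deriv q₂ T) T := (hq₂ T).hasDerivAt
    have e₁ : deriv q₁ T = -Complex.I * (q₁ T + (A : ℂ) * (starRingEnd ℂ) (q₁ T) * q₂ T) := by
      have := heq₁ T
      field_simp at this ⊢
      linear_combination -Complex.I * this + deriv q₁ T * Complex.I_sq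
    have e₂ : deriv q₂ T = -Complex.I * (q₂ T + (B : ℂ) * (q₁ T) ^ 2) := by
      have := heq₂ T
      linear_combination -Complex.I * this + deriv q₂ T * Complex.I_sq
    have h₁ : HasDerivAt (fun T => ‖q₁ T‖ ^ 2)
        (2 * (inner ℝ (q₁ T) (deriv q₁ T) : ℝ)) T := hd₁.norm_sq
    have h₂ : HasDerivAt (fun T => ‖q₂ T‖ ^ 2)
        (2 * (inner ℝ (q₂ T) (deriv q₂ T) : ℝ)) T := hd₂.norm_sq
    have key : B * (2 * (inner ℝ (q₁ T) (deriv q₁ T) : ℝ))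
        + A * (2 * (inner ℝ (q₂ T) (deriv q₂ T) : ℝ)) = 0 := by
      rw [Complex.inner, Complex.inner, e₁, e₂]
      simp only [Complex.mul_re, Complex.mul_im, Complex.add_re, Complex.add_im,
        Complex.neg_re, Complex.neg_im, Complex.I_re, Complex.I_im, Complex.conj_re,
        Complex.conj_im, Complex.ofReal_re, Complex.ofReal_im, Complex.sq_norm,
        map_pow, pow_two]
      ring
    have := (h₁.const_mul B).add (h₂.const_mul A)
    rw [key] at this
    exact this
  have hconst : ∀ T : ℝ, f T = f 0 := by
    intro T
    exact is_const_of_deriv_eq_zero (fun x => (hderiv x).differentiableAt)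
      (fun x => (hderiv x).deriv) T 0
  intro T
  have h := hconst T
  have h1 : (0:ℝ) ≤ ‖q₁ T‖ ^ 2 := by positivity
  have h2 : (0:ℝ) ≤ ‖q₂ T‖ ^ 2 := by positivity
  simp only [hf] at h
  constructor
  · rw [show ‖q₁ 0‖ ^ 2 + A / B * ‖q₂ 0‖ ^ 2 = (B * ‖q₁ 0‖ ^ 2 + A * ‖q₂ 0‖ ^ 2) / B by
      field_simp, le_div_iff₀ hB]
    nlinarith [mul_nonneg hA.le h2]
  · rw [show B / A * ‖q₁ 0‖ ^ 2 + ‖q₂ 0‖ ^ 2 = (B * ‖q₁ 0‖ ^ 2 + A * ‖q₂ 0‖ ^ 2) / A by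
      field_simp, le_div_iff₀ hA]
    nlinarith [mul_nonneg hB.le h1]
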